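/- For every pairwise reciprocal matrix A of size n, the matrix Ḡ is symmetric and positive semidefinite. -/

import Mathlib

open Matrix BigOperators

/-- A pairwise reciprocal matrix (PRM): all entries positive and `A i j * A j i = 1`. -/
def IsPRM {n : ℕ} (A : Matrix (Fin n) (Fin n) ℝ) : Prop :=
  ∀ i j, 0 < A i j ∧ A i j * A j i = 1

/-- The matrix `Ḡ` with diagonal `(n-1) + ∑_{k ≠ i} (A k i)^2` and
off-diagonal `-(A i j + A j i)`. -/
noncomputable def Gbar {n : ℕ} (A : Matrix (Fin n) (Fin n) ℝ) :
    Matrix (Fin n) (Fin n) ℝ :=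
  Matrix.of fun i j =>
    if i = j then ((n : ℝ) - 1) + ∑ k ∈ Finset.univ.filter (fun k => k ≠ i), (A k i) ^ 2
    else -(A i j + A j i)

/-- The all-ones matrix `J`. -/
noncomputable def Jmat (n : ℕ) : Matrix (Fin n) (Fin n) ℝ :=
  Matrix.of fun _ _ => 1

/-- `G = Ḡ + J`. -/
noncomputable def Gmat {n : ℕ} (A : Matrix (Fin n) (Fin n) ℝ) :
    Matrix (Fin n) (Fin n) ℝ :=
  Gbar A + Jmat n

/-- The weighted least squares objective `f(w) = ∑ i ∑ j (w i - A i j * w j)^2`. -/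
noncomputable def wls {n : ℕ} (A : Matrix (Fin n) (Fin n) ℝ) (w : Fin n → ℝ) : ℝ :=
  ∑ i, ∑ j, (w i - A i j * w j) ^ 2
/-- For every PRM `A`, the matrix `Ḡ` is symmetric and positive
semidefinite. -/
theorem Gbar_isSymm_posSemidef {n : ℕ} (hn : 1 ≤ n)
    (A : Matrix (Fin n) (Fin n) ℝ) (hA : IsPRM A) :
    (Gbar A).IsSymm ∧ (Gbar A).PosSemidef := by
  have hAd : ∀ i, A i i = 1 := by
    intro i
    nlinarith [(hA i i).1, (hA i i).2]
  have hsymm : (Gbar A).IsSymm := by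
    ext i j
    simp only [Matrix.transpose_apply, Gbar, Matrix.of_apply]
    by_cases h : i = j
    · subst h; simp
    · rw [if_neg h, if_neg (Ne.symm h)]
      ring
  have hg : ∀ i j, Gbar A i j
      = (if i = j then (n : ℝ) + ∑ k, A k i ^ 2 else 0) - (A i j + A j i) := by
    intro i j
    by_cases h : i = j
    · subst h
      simp only [Gbar, Matrix.of_apply, if_pos rfl, Finset.filter_ne', if_pos trivial]
      have h2 : (1 : ℝ) + ∑ k ∈ Finset.univ.erase i, A k i ^ 2 = ∑ k, A k i ^ 2 := by
        simpa [hAd i] using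
          Finset.add_sum_erase Finset.univ (fun k => A k i ^ 2) (Finset.mem_univ i)
      rw [hAd i]
      linarith
    · simp [Gbar, h]
  have key : ∀ x : Fin n → ℝ, x ⬝ᵥ (Gbar A) *ᵥ x = wls A x := by
    intro x
    have swap : ∑ i, ∑ j, A j i * (x i * x j) = ∑ i, ∑ j, A i j * (x i * x j) := by
      rw [Finset.sum_comm]
      exact Finset.sum_congr rfl fun i _ => Finset.sum_congr rfl fun j _ => by ring
    have swap2 : ∑ i, ∑ j, A j i ^ 2 * x i ^ 2 = ∑ i, ∑ j, A i j ^ 2 * x j ^ 2 := by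
      rw [Finset.sum_comm]
    have lhs : x ⬝ᵥ (Gbar A) *ᵥ x
        = (((n : ℝ) * ∑ i, x i ^ 2) + ∑ i, ∑ k, A k i ^ 2 * x i ^ 2)
            - 2 * ∑ i, ∑ j, A i j * (x i * x j) := by
      simp only [dotProduct, mulVec, hg]
      have two : ∑ i, ∑ j, (A i j * (x i * x j) + A j i * (x i * x j))
          = 2 * ∑ i, ∑ j, A i j * (x i * x j) := by
        simp only [Finset.sum_add_distrib]
        rw [swap]; ring
      rw [← two]
      rw [Finset.mul_sum, ← Finset.sum_add_distrib, ← Finset.sum_sub_distrib]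
      refine Finset.sum_congr rfl fun i _ => ?_
      simp only [dotProduct, sub_mul, ite_mul, zero_mul, Finset.sum_sub_distrib, mul_sub,
        mul_ite, mul_zero, Finset.sum_ite_eq, Finset.mem_univ, if_pos]
      have h3 : x i * ∑ j, (A i j + A j i) * x j
          = ∑ j, (A i j * (x i * x j) + A j i * (x i * x j)) := by
        rw [Finset.mul_sum]
        exact Finset.sum_congr rfl fun j _ => by ring
      rw [h3, ← Finset.sum_mul]
      ring
    have rhs : wls A x
        = (((n : ℝ) * ∑ i, x i ^ 2) + ∑ i, ∑ k, A k i ^ 2 * x i ^ 2)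
            - 2 * ∑ i, ∑ j, A i j * (x i * x j) := by
      unfold wls
      have expand : ∀ i j : Fin n, (x i - A i j * x j) ^ 2
          = x i ^ 2 - 2 * (A i j * (x i * x j)) + A i j ^ 2 * x j ^ 2 := fun i j => by ring
      simp only [expand, Finset.sum_add_distrib, Finset.sum_sub_distrib, Finset.sum_const,
        Finset.card_univ, Fintype.card_fin, nsmul_eq_mul, ← Finset.mul_sum]
      rw [swap2] at *
      ring
    rw [lhs, rhs]
  refine ⟨hsymm, Matrix.PosSemidef.of_dotProduct_mulVec_nonneg ?_ ?_⟩
  · exact hsymm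
  · intro x
    have hx : star x = x := funext fun i => star_trivial _
    rw [hx, key x]
    unfold wls
    positivity
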